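/- If the algebra of the second factor is maximally correlated with the algebra of the first factor in a unit vector v ∈ H₁ ⊗ H₂, then for every nonzero w ∈ H₂ one has (I ⊗ P_w)v ≠ 0, where P_w is the orthogonal projection onto the span of w; that is, the reduced density operator of v on H₂ does not have 0 as an eigenvalue. -/

import Mathlib

open scoped InnerProductSpace

noncomputable section

/-- The (completed) Hilbert tensor product of two complex Hilbert spaces `H₁`, `H₂`,
presented as a Hilbert space `H` together with a bilinear map `tmul` (elementary tensors)
whose inner products multiply, whose elementary tensors span a dense subspace, and together
with the tensor product `map A B = A ⊗ B` of bounded operators. -/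
structure HilbertTensor (H₁ H₂ H : Type*)
    [NormedAddCommGroup H₁] [InnerProductSpace ℂ H₁] [CompleteSpace H₁]
    [NormedAddCommGroup H₂] [InnerProductSpace ℂ H₂] [CompleteSpace H₂]
    [NormedAddCommGroup H] [InnerProductSpace ℂ H] [CompleteSpace H] where
  tmul : H₁ →ₗ[ℂ] H₂ →ₗ[ℂ] H
  inner_tmul : ∀ x₁ y₁ x₂ y₂, ⟪tmul x₁ y₁, tmul x₂ y₂⟫_ℂ = ⟪x₁, x₂⟫_ℂ * ⟪y₁, y₂⟫_ℂ
  dense_span : Dense (↑(Submodule.span ℂ {z : H | ∃ x y, z = tmul x y}) : Set H)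
  map : (H₁ →L[ℂ] H₁) → (H₂ →L[ℂ] H₂) → (H →L[ℂ] H)
  map_tmul : ∀ A B x y, map A B (tmul x y) = tmul (A x) (B y)

variable {H₁ H₂ H : Type*}
  [NormedAddCommGroup H₁] [InnerProductSpace ℂ H₁] [CompleteSpace H₁]
  [NormedAddCommGroup H₂] [InnerProductSpace ℂ H₂] [CompleteSpace H₂]
  [NormedAddCommGroup H] [InnerProductSpace ℂ H] [CompleteSpace H]

/-- `v` is cyclic for the first factor: `{(A ⊗ I) v : A bounded on H₁}` is dense in `H`. -/
def HilbertTensor.CyclicFst (T : HilbertTensor H₁ H₂ H) (v : H) : Prop :=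
  Dense (Set.range fun A : H₁ →L[ℂ] H₁ => T.map A 1 v)

/-- An orthogonal projection on a Hilbert space: a self-adjoint idempotent bounded operator. -/
def IsONProj {E : Type*} [NormedAddCommGroup E] [InnerProductSpace ℂ E] [CompleteSpace E]
    (P : E →L[ℂ] E) : Prop :=
  IsSelfAdjoint P ∧ P ∘L P = P

/-- The algebra of the second factor is maximally correlated with the algebra of the first
factor in the state `v`. -/
def HilbertTensor.MaxCorrSndFst (T : HilbertTensor H₁ H₂ H) (v : H) : Prop :=
  ∀ P' : H₂ →L[ℂ] H₂, IsONProj P' → P' ≠ 0 → ∀ ε : ℝ, 0 < ε →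
    ∃ P : H₁ →L[ℂ] H₁, IsONProj P ∧ P ≠ 0 ∧
      0 < (⟪v, T.map P 1 v⟫_ℂ).re ∧
      (1 - ε) * (⟪v, T.map P 1 v⟫_ℂ).re ≤ (⟪v, T.map P P' v⟫_ℂ).re

/-- The orthogonal projection onto the span of a vector, as an operator `E →L[ℂ] E`. -/
def projSpan {E : Type*} [NormedAddCommGroup E] [InnerProductSpace ℂ E] [CompleteSpace E]
    (w : E) : E →L[ℂ] E :=
  (ℂ ∙ w).subtypeL ∘L Submodule.orthogonalProjection (ℂ ∙ w)

/-- if the algebra of the second factor is maximally correlated with the algebra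
of the first factor in the unit vector `v ∈ H₁ ⊗ H₂`, then `(I ⊗ P_w) v ≠ 0` for every
nonzero `w ∈ H₂`; i.e. the reduced density operator of `v` on `H₂` does not have `0` as an
eigenvalue. -/
theorem maxCorr_imp_reduced_density_no_zero_eigenvalue
    [TopologicalSpace.SeparableSpace H₁] [TopologicalSpace.SeparableSpace H₂]
    (h₁ : 1 < Module.rank ℂ H₁) (h₂ : 1 < Module.rank ℂ H₂)
    (T : HilbertTensor H₁ H₂ H) (v : H) (hv : ‖v‖ = 1)
    (hmc : T.MaxCorrSndFst v) :
    ∀ w : H₂, w ≠ 0 → T.map 1 (projSpan w) v ≠ 0 := by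
  intro w hw hzero
  have hproj : IsONProj (projSpan w) := by
    constructor
    · exact isSelfAdjoint_starProjection _
    · ext x
      simp [projSpan, Submodule.starProjection_eq_self_iff]
  have hne : projSpan w ≠ 0 := by
    intro h
    apply hw
    have hw' : projSpan w w = w := by
      exact Submodule.starProjection_eq_self_iff.2 (Submodule.mem_span_singleton_self w)
    rw [h] at hw'
    simpa using hw'.symm
  obtain ⟨P, hP, hPne, hpos, hineq⟩ := hmc (projSpan w) hproj hne (1/2) (by norm_num)
  have hcomp : T.map P (projSpan w) = (T.map P 1) ∘L (T.map 1 (projSpan w)) := by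
    symm
    apply ContinuousLinearMap.ext_on T.dense_span
    rintro z ⟨x, y, rfl⟩
    simp [T.map_tmul]
  have h0 : T.map P (projSpan w) v = 0 := by
    rw [hcomp]; simp [hzero]
  rw [h0] at hineq
  simp only [inner_zero_right, Complex.zero_re] at hineq
  nlinarith

end
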